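/- Every matrix in SL_d(ℂ) is a commutator: for all M ∈ SL_d(ℂ) there exist A, B ∈ GL_d(ℂ) with M = A B A^{-1} B^{-1}. -/

import Mathlib

open Matrix

noncomputable section ShodaAux

lemma perm_conj {n : ℕ} (σ : Equiv.Perm (Fin n)) :
    ∃ P : (Matrix (Fin n) (Fin n) ℂ)ˣ,
      ∀ N : Matrix (Fin n) (Fin n) ℂ, N.submatrix σ σ = P.val * N * (P⁻¹).val := by
  have key : ∀ (A B : Matrix (Fin n) (Fin n) ℂ),
      (1 : Matrix (Fin n) (Fin n) ℂ).submatrix ⇑σ id * A *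
        ((1 : Matrix (Fin n) (Fin n) ℂ).submatrix id ⇑σ * B) = A.submatrix ⇑σ ⇑σ * B := by
    intro A B
    ext i j
    simp only [Matrix.mul_apply, Matrix.submatrix_apply, Matrix.one_apply, id_eq,
      ite_mul, one_mul, zero_mul, Finset.sum_ite_eq, Finset.mem_univ, if_true,
      Finset.mul_sum, Finset.sum_mul, mul_ite, mul_zero, mul_one]
    rw [Finset.sum_comm]
    simp
  have h1 : (1 : Matrix (Fin n) (Fin n) ℂ).submatrix ⇑σ id *
      (1 : Matrix (Fin n) (Fin n) ℂ).submatrix id ⇑σ = 1 := by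
    have := key 1 1
    simpa [Matrix.submatrix_one_equiv σ] using this
  have h2 : (1 : Matrix (Fin n) (Fin n) ℂ).submatrix id ⇑σ *
      (1 : Matrix (Fin n) (Fin n) ℂ).submatrix ⇑σ id = 1 := by
    ext i j
    simp only [Matrix.mul_apply, Matrix.submatrix_apply, Matrix.one_apply, id_eq,
      ite_mul, one_mul, zero_mul, mul_ite, mul_one, mul_zero]
    rw [Finset.sum_eq_single (σ.symm i)] <;>
      simp +contextual [Equiv.eq_symm_apply, Matrix.one_apply, eq_comm]
  refine ⟨⟨_, _, h1, h2⟩, fun N => ?_⟩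
  show N.submatrix ⇑σ ⇑σ = (1 : Matrix (Fin n) (Fin n) ℂ).submatrix ⇑σ id * N *
      (1 : Matrix (Fin n) (Fin n) ℂ).submatrix id ⇑σ
  have := key N 1
  rw [mul_one, mul_one] at this
  rw [← this, mul_assoc]

lemma sim_diagonal {n : ℕ} (hn : 0 < n) (U : Matrix (Fin n) (Fin n) ℂ) (c : Fin n → ℂ)
    (hc : Function.Injective c)
    (hv : ∀ i, ∃ v : Fin n → ℂ, v ≠ 0 ∧ U.mulVec v = c i • v) :
    ∃ Q : (Matrix (Fin n) (Fin n) ℂ)ˣ,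
      U = Q.val * Matrix.diagonal c * (Q⁻¹).val := by
  haveI : Nonempty (Fin n) := Fin.pos_iff_nonempty.1 hn
  choose v hv0 hveq using hv
  have li : LinearIndependent ℂ v := by
    refine Module.End.eigenvectors_linearIndependent' (Matrix.mulVecLin U) c hc v fun i => ?_
    exact ⟨Module.End.mem_eigenspace_iff.2 (by simpa using hveq i), hv0 i⟩
  have hcard : Fintype.card (Fin n) = Module.finrank ℂ (Fin n → ℂ) := by
    simp [Module.finrank_pi]
  let bv : Module.Basis (Fin n) ℂ (Fin n → ℂ) := basisOfLinearIndependentOfCardEqFinrank li hcard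
  have hbv : ⇑bv = v := coe_basisOfLinearIndependentOfCardEqFinrank li hcard
  let Q : Matrix (Fin n) (Fin n) ℂ := (Pi.basisFun ℂ (Fin n)).toMatrix ⇑bv
  haveI : Invertible Q := (Pi.basisFun ℂ (Fin n)).invertibleToMatrix bv
  have hQ : ∀ i j, Q i j = v j i := by
    intro i j
    simp [Q, Module.Basis.toMatrix_apply, hbv]
  have key : U * Q = Q * Matrix.diagonal c := by
    ext i j
    rw [Matrix.mul_apply, Matrix.mul_diagonal, hQ]
    have := congrFun (hveq j) i
    simp only [Matrix.mulVec, dotProduct, Pi.smul_apply, smul_eq_mul] at this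
    simp only [hQ]
    rw [this, mul_comm]
  refine ⟨unitOfInvertible Q, ?_⟩
  have : (unitOfInvertible Q)⁻¹.val = ⅟Q := rfl
  rw [this]
  calc U = U * Q * ⅟Q := by rw [mul_assoc, mul_invOf_self, mul_one]
  _ = Q * Matrix.diagonal c * ⅟Q := by rw [key]

lemma comb_empty (ι : Type) [Fintype ι] [DecidableEq ι] [IsEmpty ι] (t : ι → ℂˣ) :
    ∃ (b : ι → ℂˣ) (π : Equiv.Perm ι), Function.Injective b ∧ ∀ i, b (π i) = b i * t i :=
  ⟨fun _ => 1, 1, fun a => (IsEmpty.false a).elim, fun i => (IsEmpty.false i).elim⟩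

lemma comb (n : ℕ) : ∀ (ι : Type) [Fintype ι] [DecidableEq ι], Fintype.card ι ≤ n →
    ∀ (t : ι → ℂˣ), ∏ i, t i = 1 →
    ∃ (b : ι → ℂˣ) (π : Equiv.Perm ι), Function.Injective b ∧ ∀ i, b (π i) = b i * t i := by
  induction n with
  | zero =>
    intro ι _ _ hcard t _
    haveI : IsEmpty ι := Fintype.card_eq_zero_iff.1 (Nat.le_zero.1 hcard)
    exact comb_empty ι t
  | succ n ih =>
    intro ι _ _ hcard t ht
    rcases isEmpty_or_nonempty ι with hemp | hne
    · exact comb_empty ι t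
    by_cases hs : ∃ s : Finset ι, s.Nonempty ∧ s ≠ Finset.univ ∧ ∏ i ∈ s, t i = 1
    · -- split into two pieces and glue
      obtain ⟨s, hne', hsu, hsp⟩ := hs
      have hprod_compl : ∏ i ∈ sᶜ, t i = 1 := by
        have h := Finset.prod_mul_prod_compl s t
        rw [hsp, one_mul] at h
        rw [h, ht]
      have h1 : ∏ i : {x // x ∈ s}, t ↑i = 1 := by
        rw [Finset.prod_coe_sort s t, hsp]
      have h2 : ∏ i : {x // ¬ x ∈ s}, t ↑i = 1 := by
        rw [Finset.prod_subtype sᶜ (fun x => Finset.mem_compl) (fun x => t x)] at hprod_compl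
        exact hprod_compl
      have hslt : s.card < Fintype.card ι := by
        have := Finset.card_lt_card (Finset.ssubset_univ_iff.2 hsu)
        simpa using this
      have hcard1 : Fintype.card {x // x ∈ s} ≤ n := by
        rw [Fintype.card_coe]
        omega
      have hcard2 : Fintype.card {x // ¬ x ∈ s} ≤ n := by
        rw [Fintype.card_subtype_compl]
        have h3 : Fintype.card {x // x ∈ s} = s.card := Fintype.card_coe s
        have h4 : 1 ≤ s.card := Finset.card_pos.2 hne'
        omega
      obtain ⟨b₁, π₁, hinj₁, hrel₁⟩ := ih {x // x ∈ s} hcard1 (fun x => t ↑x) h1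
      obtain ⟨b₂, π₂, hinj₂, hrel₂⟩ := ih {x // ¬ x ∈ s} hcard2 (fun x => t ↑x) h2
      haveI : Infinite ℂˣ := Infinite.of_injective
        (fun k : ℕ => Units.mk0 ((k : ℂ) + 1) (Nat.cast_add_one_ne_zero k))
        (by
          intro a b h
          have := congrArg Units.val h
          simp only [Units.val_mk0, add_left_inj] at this
          exact_mod_cast this)
      obtain ⟨c, hc⟩ := Infinite.exists_notMem_finset
        (Finset.image (fun q : {x // ¬ x ∈ s} × {x // x ∈ s} => b₂ q.1 * (b₁ q.2)⁻¹) Finset.univ)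
      refine ⟨fun i => if h : i ∈ s then c * b₁ ⟨i, h⟩ else b₂ ⟨i, h⟩,
        Equiv.Perm.subtypeCongr π₁ π₂, ?_, ?_⟩
      · intro x y hxy
        dsimp only at hxy
        by_cases hx : x ∈ s <;> by_cases hy : y ∈ s
        · rw [dif_pos hx, dif_pos hy] at hxy
          have := hinj₁ (mul_left_cancel hxy)
          exact congrArg Subtype.val this
        · rw [dif_pos hx, dif_neg hy] at hxy
          exact absurd (Finset.mem_image.2 ⟨(⟨y, hy⟩, ⟨x, hx⟩), Finset.mem_univ _, by
            rw [← hxy]; group⟩) hc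
        · rw [dif_neg hx, dif_pos hy] at hxy
          exact absurd (Finset.mem_image.2 ⟨(⟨x, hx⟩, ⟨y, hy⟩), Finset.mem_univ _, by
            rw [hxy]; group⟩) hc
        · rw [dif_neg hx, dif_neg hy] at hxy
          exact congrArg Subtype.val (hinj₂ hxy)
      · intro i
        by_cases h : i ∈ s
        · have hπ : Equiv.Perm.subtypeCongr π₁ π₂ i = ↑(π₁ ⟨i, h⟩) :=
            Equiv.Perm.subtypeCongr.left_apply π₁ π₂ h
          dsimp only
          rw [hπ, dif_pos (π₁ ⟨i, h⟩).2, dif_pos h]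
          rw [Subtype.coe_eta, hrel₁ ⟨i, h⟩, mul_assoc]
        · have hπ : Equiv.Perm.subtypeCongr π₁ π₂ i = ↑(π₂ ⟨i, h⟩) :=
            Equiv.Perm.subtypeCongr.right_apply π₁ π₂ h
          dsimp only
          rw [hπ, dif_neg (π₂ ⟨i, h⟩).2, dif_neg h]
          rw [Subtype.coe_eta, hrel₂ ⟨i, h⟩]
    · -- single cycle
      push_neg at hs
      obtain ⟨m', hm'⟩ : ∃ m', Fintype.card ι = m' + 1 :=
        ⟨Fintype.card ι - 1, (Nat.succ_pred_eq_of_pos Fintype.card_pos).symm⟩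
      set e : ι ≃ Fin (m' + 1) := (Fintype.equivFin ι).trans (finCongr hm') with he
      set g : ℕ → ℂˣ := fun l => if h : l < m' + 1 then t (e.symm ⟨l, h⟩) else 1 with hg
      set P : ℕ → ℂˣ := fun k => ∏ l ∈ Finset.range k, g l with hP
      have hgval : ∀ i : ι, g (e i : ℕ) = t i := by
        intro i
        have h : ((e i : ℕ)) < m' + 1 := (e i).2
        rw [hg]
        simp only [dif_pos h]
        congr 1
        rw [Fin.eta, Equiv.symm_apply_apply]
      have hPm : P (m' + 1) = 1 := by
        have hh1 : P (m' + 1) = ∏ l : Fin (m' + 1), g ↑l :=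
          (Fin.prod_univ_eq_prod_range g (m' + 1)).symm
        have hh2 : ∏ l : Fin (m' + 1), g ↑l = ∏ l : Fin (m' + 1), t (e.symm l) := by
          apply Finset.prod_congr rfl
          intro l _
          rw [hg]
          simp only [dif_pos l.2, Fin.eta]
        rw [hh1, hh2, Equiv.prod_comp e.symm t, ht]
      have hPinj : ∀ j j' : ℕ, j < j' → j' < m' + 1 → P j ≠ P j' := by
        intro j j' hjj hj'm hPeq
        have hico : ∏ l ∈ Finset.Ico j j', g l = 1 := by
          rw [Finset.prod_Ico_eq_div g (le_of_lt hjj)]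
          show P j' / P j = 1
          rw [hPeq]
          exact div_self' _
        set sF : Finset ι := Finset.univ.filter (fun i => (e i : ℕ) ∈ Finset.Ico j j') with hsF
        have hprod : ∏ i ∈ sF, t i = ∏ l ∈ Finset.Ico j j', g l := by
          refine Finset.prod_bij (fun i _ => (e i : ℕ)) ?_ ?_ ?_ ?_
          · intro a ha
            exact (Finset.mem_filter.1 ha).2
          · intro a₁ ha₁ a₂ ha₂ hval
            exact e.injective (Fin.val_injective hval)
          · intro l hl
            have hlm : l < m' + 1 := lt_trans (Finset.mem_Ico.1 hl).2 hj'm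
            exact ⟨e.symm ⟨l, hlm⟩, Finset.mem_filter.2 ⟨Finset.mem_univ _, by
              simp only [Equiv.apply_symm_apply]; exact hl⟩, by
                simp only [Equiv.apply_symm_apply]⟩
          · intro a ha
            rw [hgval]
        have hne2 : sF.Nonempty := ⟨e.symm ⟨j, lt_trans hjj hj'm⟩, Finset.mem_filter.2
          ⟨Finset.mem_univ _, by rw [Equiv.apply_symm_apply]; exact Finset.mem_Ico.2 ⟨le_refl _, hjj⟩⟩⟩
        have hnu : sF ≠ Finset.univ := by
          intro hcontra
          have hmem : e.symm ⟨j', hj'm⟩ ∈ sF := hcontra ▸ Finset.mem_univ _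
          rw [hsF, Finset.mem_filter] at hmem
          rw [Equiv.apply_symm_apply] at hmem
          exact absurd hmem.2 (by simp)
        exact hs sF hne2 hnu (by rw [hprod, hico])
      refine ⟨fun i => P (e i : ℕ), (e.trans (finRotate (m' + 1))).trans e.symm, ?_, ?_⟩
      · intro x y hxy
        rcases lt_trichotomy ((e x : ℕ)) ((e y : ℕ)) with hlt | heq | hgt
        · exact absurd hxy (hPinj _ _ hlt (e y).2)
        · exact e.injective (Fin.val_injective heq)
        · exact absurd hxy.symm (hPinj _ _ hgt (e x).2)
      · intro i
        have hπ : ((e.trans (finRotate (m' + 1))).trans e.symm) i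
            = e.symm (finRotate (m' + 1) (e i)) := rfl
        rw [hπ, finRotate_succ_apply]
        dsimp only
        rw [Equiv.apply_symm_apply]
        by_cases hlast : e i = Fin.last m'
        · have hv : ((e i + 1 : Fin (m' + 1)) : ℕ) = 0 := by
            rw [Fin.val_add_one, if_pos hlast]
          have hv2 : ((e i : ℕ)) = m' := by rw [hlast]; rfl
          have htg : t i = g m' := by rw [← hgval i, hv2]
          rw [hv, hv2, htg]
          have hstep : P m' * g m' = P (m' + 1) := (Finset.prod_range_succ g m').symm
          rw [hstep, hPm]
          rw [hP]
          simp
        · have hv : ((e i + 1 : Fin (m' + 1)) : ℕ) = (e i : ℕ) + 1 := by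
            rw [Fin.val_add_one, if_neg hlast]
          rw [hv, ← hgval i, hP]
          exact Finset.prod_range_succ g (e i : ℕ)

def lift1 {n : ℕ} (S : Matrix (Fin n) (Fin n) ℂ) : Matrix (Fin (n+1)) (Fin (n+1)) ℂ :=
  Matrix.of fun i j => Fin.cases (Fin.cases 1 (fun _ => 0) j)
    (fun i' => Fin.cases 0 (fun j' => S i' j') j) i

@[simp] lemma lift1_zero_zero {n : ℕ} (S : Matrix (Fin n) (Fin n) ℂ) :
    lift1 S 0 0 = 1 := rfl
@[simp] lemma lift1_zero_succ {n : ℕ} (S : Matrix (Fin n) (Fin n) ℂ) (j : Fin n) :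
    lift1 S 0 j.succ = 0 := rfl
@[simp] lemma lift1_succ_zero {n : ℕ} (S : Matrix (Fin n) (Fin n) ℂ) (i : Fin n) :
    lift1 S i.succ 0 = 0 := rfl
@[simp] lemma lift1_succ_succ {n : ℕ} (S : Matrix (Fin n) (Fin n) ℂ) (i j : Fin n) :
    lift1 S i.succ j.succ = S i j := rfl

lemma lift1_mul {n : ℕ} (S T : Matrix (Fin n) (Fin n) ℂ) :
    lift1 S * lift1 T = lift1 (S * T) := by
  ext i j
  rw [Matrix.mul_apply, Fin.sum_univ_succ]
  induction i using Fin.cases with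
  | zero =>
    induction j using Fin.cases with
    | zero => simp
    | succ j' => simp
  | succ i' =>
    induction j using Fin.cases with
    | zero => simp
    | succ j' => simp [Matrix.mul_apply]

lemma lift1_one {n : ℕ} : lift1 (1 : Matrix (Fin n) (Fin n) ℂ) = 1 := by
  ext i j
  induction i using Fin.cases with
  | zero =>
    induction j using Fin.cases with
    | zero => simp
    | succ j' => simp [Matrix.one_apply, (Fin.succ_ne_zero j').symm]
  | succ i' =>
    induction j using Fin.cases with
    | zero => simp [Matrix.one_apply, Fin.succ_ne_zero i']
    | succ j' => simp [Matrix.one_apply, Fin.succ_inj]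

lemma exists_eigen {n : ℕ} (hn : 0 < n) (N : Matrix (Fin n) (Fin n) ℂ) :
    ∃ (μ : ℂ) (v : Fin n → ℂ), v ≠ 0 ∧ N.mulVec v = μ • v := by
  haveI : Nonempty (Fin n) := Fin.pos_iff_nonempty.1 hn
  obtain ⟨μ, hμ⟩ := Module.End.exists_eigenvalue (Matrix.mulVecLin N)
  obtain ⟨v, hv⟩ := hμ.exists_hasEigenvector
  exact ⟨μ, v, hv.2, by simpa using hv.apply_eq_smul⟩



lemma triang : ∀ (n : ℕ) (N : Matrix (Fin n) (Fin n) ℂ),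
    ∃ P : (Matrix (Fin n) (Fin n) ℂ)ˣ,
      ∀ i j : Fin n, j < i → ((P⁻¹).val * N * P.val) i j = 0 := by
  intro n
  induction n with
  | zero => exact fun N => ⟨1, fun i j _ => i.elim0⟩
  | succ n ih =>
    intro N
    obtain ⟨μ, v, hv0, hveq⟩ := exists_eigen (Nat.succ_pos n) N
    obtain ⟨k, hk⟩ := Function.ne_iff.1 hv0
    have hk' : v k ≠ 0 := by simpa using hk
    set Q0 : Matrix (Fin (n+1)) (Fin (n+1)) ℂ :=
      (1 : Matrix (Fin (n+1)) (Fin (n+1)) ℂ).updateCol k v with hQ0def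
    have hdet : Q0.det = v k := by
      rw [hQ0def, ← Matrix.cramer_apply, Matrix.cramer_one]
      rfl
    have hQ0unit : IsUnit Q0 := (Matrix.isUnit_iff_isUnit_det Q0).2
      (by rw [hdet]; exact isUnit_iff_ne_zero.2 hk')
    set Qu : (Matrix (Fin (n+1)) (Fin (n+1)) ℂ)ˣ := hQ0unit.unit with hQudef
    have hQuval : Qu.val = Q0 := hQ0unit.unit_spec
    have hQv : Q0.mulVec (Pi.single k 1) = v := by
      ext i
      rw [Matrix.mulVec_single]
      simp [hQ0def, Matrix.updateCol_apply]
    set N₁ : Matrix (Fin (n+1)) (Fin (n+1)) ℂ := (Qu⁻¹).val * N * Qu.val with hN₁def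
    have hN₁vec : N₁.mulVec (Pi.single k 1) = μ • (Pi.single k 1 : Fin (n+1) → ℂ) := by
      rw [hN₁def, ← Matrix.mulVec_mulVec, ← Matrix.mulVec_mulVec, hQuval, hQv, hveq,
        Matrix.mulVec_smul]
      congr 1
      have : (Qu⁻¹).val.mulVec (Qu.val.mulVec (Pi.single k 1)) = Pi.single k 1 := by
        rw [Matrix.mulVec_mulVec, Units.inv_mul, Matrix.one_mulVec]
      rw [← this, hQuval, hQv]
    have hN₁col : ∀ i, N₁ i k = if i = k then μ else 0 := by
      intro i
      have h1 : N₁.mulVec (Pi.single k 1) i = N₁ i k := by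
        simp [Matrix.mulVec_single]
      rw [← h1, hN₁vec]
      simp [Pi.single_apply]
    set σ : Equiv.Perm (Fin (n+1)) := Equiv.swap 0 k with hσdef
    obtain ⟨Pσ, hPσ⟩ := perm_conj σ
    set N₂ : Matrix (Fin (n+1)) (Fin (n+1)) ℂ := N₁.submatrix σ σ with hN₂def
    have hN₂col : ∀ i : Fin (n+1), i ≠ 0 → N₂ i 0 = 0 := by
      intro i hi
      rw [hN₂def, Matrix.submatrix_apply]
      have h0 : σ 0 = k := Equiv.swap_apply_left 0 k
      rw [h0, hN₁col]
      rw [if_neg]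
      intro hcontra
      apply hi
      have : σ i = σ 0 := by rw [h0, hcontra]
      exact σ.injective this
    set M' : Matrix (Fin n) (Fin n) ℂ := N₂.submatrix Fin.succ Fin.succ with hM'def
    obtain ⟨S, hS⟩ := ih M'
    set Su : (Matrix (Fin (n+1)) (Fin (n+1)) ℂ)ˣ :=
      ⟨lift1 S.val, lift1 (S⁻¹).val,
        by rw [lift1_mul, Units.mul_inv, lift1_one],
        by rw [lift1_mul, Units.inv_mul, lift1_one]⟩ with hSudef
    have hN₃ : ∀ i j : Fin (n+1), j < i →
        (lift1 (S⁻¹).val * N₂ * lift1 S.val) i j = 0 := by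
      intro i j
      induction i using Fin.cases with
      | zero => exact fun hij => absurd hij (Fin.not_lt_zero j)
      | succ i' =>
        induction j using Fin.cases with
        | zero =>
          intro _
          rw [Matrix.mul_apply, Fin.sum_univ_succ]
          simp only [lift1_zero_zero, lift1_succ_zero, mul_one, mul_zero,
            Finset.sum_const_zero, add_zero]
          rw [Matrix.mul_apply, Fin.sum_univ_succ]
          simp only [lift1_succ_zero, zero_mul, zero_add]
          apply Finset.sum_eq_zero
          intro x _
          rw [hN₂col x.succ (Fin.succ_ne_zero x), mul_zero]
        | succ j' =>
          intro hij
          have hij' : j' < i' := by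
            have := Fin.succ_lt_succ_iff.1 hij
            exact this
          have hfinal := hS i' j' hij'
          rw [← hfinal]
          simp only [Matrix.mul_apply, Fin.sum_univ_succ, lift1_zero_succ, lift1_succ_zero,
            lift1_succ_succ, zero_mul, mul_zero, zero_add, add_zero, Finset.sum_const_zero]
          rfl
    refine ⟨Qu * Pσ⁻¹ * Su, fun i j hij => ?_⟩
    have hrw : (((Qu * Pσ⁻¹ * Su)⁻¹).val * N * (Qu * Pσ⁻¹ * Su).val)
        = lift1 (S⁻¹).val * N₂ * lift1 S.val := by
      rw [hN₂def, hPσ N₁, hN₁def]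
      have hSuval : Su.val = lift1 S.val := rfl
      have hSuinv : (Su⁻¹).val = lift1 (S⁻¹).val := rfl
      simp only [_root_.mul_inv_rev, inv_inv, Units.val_mul, hSuval, hSuinv, mul_assoc]
    rw [hrw]
    exact hN₃ i j hij

end ShodaAux





/-- Shoda's theorem: every matrix in `SL_d(ℂ)` is a commutator of elements of `GL_d(ℂ)`. -/
theorem shoda_commutator (d : ℕ) (hd : 1 ≤ d)
    (M : Matrix.SpecialLinearGroup (Fin d) ℂ) :
    ∃ A B : GL (Fin d) ℂ,
      (M : Matrix (Fin d) (Fin d) ℂ) =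
        ((A * B * A⁻¹ * B⁻¹ : GL (Fin d) ℂ) : Matrix (Fin d) (Fin d) ℂ) := by
  have hdpos : 0 < d := hd
  set Mv : Matrix (Fin d) (Fin d) ℂ := (M : Matrix (Fin d) (Fin d) ℂ) with hMv
  have hMdet : Mv.det = 1 := M.2
  obtain ⟨P, hP⟩ := triang d Mv
  set T : Matrix (Fin d) (Fin d) ℂ := (P⁻¹).val * Mv * P.val with hTdef
  have hTtri : T.BlockTriangular id := fun i j h => hP i j h
  have hTdet : T.det = 1 := by
    rw [hTdef, Matrix.det_mul, Matrix.det_mul]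
    have : (P⁻¹).val.det * P.val.det = 1 := by
      rw [mul_comm, ← Matrix.det_mul, Units.mul_inv, Matrix.det_one]
    calc (P⁻¹).val.det * Mv.det * P.val.det
        = (P⁻¹).val.det * P.val.det * Mv.det := by ring
    _ = 1 := by rw [this, one_mul, hMdet]
  have hprodT : ∏ i, T i i = 1 := by
    rw [← Matrix.det_of_upperTriangular hTtri, hTdet]
  have hTne : ∀ i, T i i ≠ 0 := by
    intro i hzero
    have h0 : ∏ i, T i i = 0 := Finset.prod_eq_zero (Finset.mem_univ i) hzero
    rw [hprodT] at h0
    exact one_ne_zero h0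
  set t : Fin d → ℂˣ := fun i => Units.mk0 (T i i) (hTne i) with htdef
  have hprodt : ∏ i, t i = 1 := by
    apply Units.ext
    push_cast
    rw [← hprodT]
    norm_num [htdef]
  obtain ⟨b, π, hbinj, hbrel⟩ := comb d (Fin d) (by simp) t hprodt
  -- A = diagonal of inverses of b
  set Au : (Matrix (Fin d) (Fin d) ℂ)ˣ :=
    ⟨Matrix.diagonal (fun i => (((b i)⁻¹ : ℂˣ) : ℂ)),
     Matrix.diagonal (fun i => ((b i : ℂˣ) : ℂ)),
     by rw [Matrix.diagonal_mul_diagonal]; convert Matrix.diagonal_one using 2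
        simp [← Units.val_mul],
     by rw [Matrix.diagonal_mul_diagonal]; convert Matrix.diagonal_one using 2
        simp [← Units.val_mul]⟩ with hAudef
  have hAuinv : (Au⁻¹).val = Matrix.diagonal (fun i => ((b i : ℂˣ) : ℂ)) := rfl
  set C : Matrix (Fin d) (Fin d) ℂ := (Au⁻¹).val * T with hCdef
  have hCtri : C.BlockTriangular id := by
    rw [hCdef, hAuinv]
    exact (Matrix.blockTriangular_diagonal _).mul hTtri
  have hCdiag : ∀ i, C i i = ((b (π i) : ℂˣ) : ℂ) := by
    intro i
    rw [hCdef, hAuinv, Matrix.diagonal_mul, hbrel i, Units.val_mul]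
    rfl
  set c : Fin d → ℂ := fun i => ((b (π i) : ℂˣ) : ℂ) with hcdef
  have hcinj : Function.Injective c := fun x y h =>
    π.injective (hbinj (Units.ext h))
  have heig : ∀ i, ∃ v : Fin d → ℂ, v ≠ 0 ∧ C.mulVec v = c i • v := by
    intro i
    have hsub : (C - c i • 1).BlockTriangular id := by
      have h1 : (c i • (1 : Matrix (Fin d) (Fin d) ℂ)) =
          Matrix.diagonal (fun _ => c i) := by
        ext a b'
        by_cases hab : a = b' <;>
          simp [Matrix.one_apply, Matrix.diagonal_apply, hab]
      rw [h1]
      exact hCtri.sub (Matrix.blockTriangular_diagonal _)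
    have hdet0 : (C - c i • 1).det = 0 := by
      rw [Matrix.det_of_upperTriangular hsub]
      apply Finset.prod_eq_zero (Finset.mem_univ i)
      simp [Matrix.smul_apply, Matrix.one_apply, hCdiag i, hcdef]
    obtain ⟨v, hv0, hveq⟩ := (Matrix.exists_mulVec_eq_zero_iff.2 hdet0)
    refine ⟨v, hv0, ?_⟩
    rw [Matrix.sub_mulVec, Matrix.smul_mulVec, Matrix.one_mulVec] at hveq
    exact sub_eq_zero.1 hveq
  obtain ⟨Q, hQsim⟩ := sim_diagonal hdpos C c hcinj heig
  have hdsub : Matrix.diagonal c =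
      (Matrix.diagonal (fun i => ((b i : ℂˣ) : ℂ))).submatrix π π := by
    rw [Matrix.submatrix_diagonal _ _ π.injective]
    rfl
  obtain ⟨Pπ, hPπ⟩ := perm_conj π
  have hdc : Matrix.diagonal c = Pπ.val * (Au⁻¹).val * (Pπ⁻¹).val := by
    rw [hdsub, hPπ, hAuinv]
  set Bu := Q * Pπ with hBudef
  have hC2 : C = Bu.val * (Au⁻¹).val * (Bu⁻¹).val := by
    rw [hQsim, hdc, hBudef]
    simp only [Units.val_mul, _root_.mul_inv_rev, mul_assoc]
  have hT2 : T = Au.val * Bu.val * (Au⁻¹).val * (Bu⁻¹).val := by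
    have hAC : Au.val * C = T := by
      rw [hCdef, ← mul_assoc, Units.mul_inv, one_mul]
    rw [← hAC, hC2]
    simp only [mul_assoc]
  refine ⟨P * Au * P⁻¹, P * Bu * P⁻¹, ?_⟩
  have hMT : Mv = P.val * T * (P⁻¹).val := by
    have h1 : P.val * (P⁻¹).val = (1 : Matrix (Fin d) (Fin d) ℂ) := Units.mul_inv P
    calc Mv = (P.val * (P⁻¹).val) * Mv * (P.val * (P⁻¹).val) := by
          rw [h1, one_mul, mul_one]
    _ = P.val * T * (P⁻¹).val := by rw [hTdef]; simp only [mul_assoc]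
  have hgroup : (P * Au * P⁻¹) * (P * Bu * P⁻¹) * (P * Au * P⁻¹)⁻¹ * (P * Bu * P⁻¹)⁻¹
      = P * (Au * Bu * Au⁻¹ * Bu⁻¹) * P⁻¹ := by group
  show Mv = ((P * Au * P⁻¹) * (P * Bu * P⁻¹) * (P * Au * P⁻¹)⁻¹ * (P * Bu * P⁻¹)⁻¹).val
  rw [hgroup, hMT, hT2]
  simp only [Units.val_mul, mul_assoc]
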